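/- arXiv:1803.06578 — 3 statements merged into one kernel-verified Lean document; each statement's English description precedes it below -/
import Mathlib

section
/- In the structural model η = α + Σ_{j=1}^l B_j φ_j(ξ) + Σ_{k=1}^r Γ_k Z_k + ζ, with each φ_j(ξ) and each Z_k square-integrable, ζ square-integrable, independent of (ξ, X, Z), with mean 0 and variance Ψ, and with φ*_j := E[φ_j(ξ) | σ(X,Z)], the residual variance of the step-two linear model (replacing the latent terms by their conditional-mean predictions) satisfies Var(η − Σ_{j=1}^l B_j φ*_j − Σ_{k=1}^r Γ_k Z_k) = Ψ + Var(Σ_{j=1}^l B_j (φ_j(ξ) − φ*_j)); i.e., the limiting residual variance exceeds the true residual variance Ψ by exactly the variance of the prediction error of the non-linear latent terms. -/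
open MeasureTheory ProbabilityTheory

/-- The covariance of two real random variables. -/
noncomputable def covar {Ω : Type*} {mΩ : MeasurableSpace Ω} (P : Measure Ω) (f g : Ω → ℝ) : ℝ :=
  ∫ ω, (f ω - ∫ x, f x ∂P) * (g ω - ∫ x, g x ∂P) ∂P

/-- The variance of a real random variable. -/
noncomputable def var {Ω : Type*} {mΩ : MeasurableSpace Ω} (P : Measure Ω) (f : Ω → ℝ) : ℝ :=
  covar P f f


lemma aux_var_eq_variance {Ω : Type*} {mΩ : MeasurableSpace Ω} {P : Measure Ω}
    [IsFiniteMeasure P] {f : Ω → ℝ} (hf : MemLp f 2 P) :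
    (∫ ω, (f ω - ∫ x, f x ∂P) * (f ω - ∫ x, f x ∂P) ∂P) = variance f P := by
  rw [variance_eq_integral hf.aemeasurable]
  refine integral_congr_ae (Filter.Eventually.of_forall fun ω => ?_)
  simp [sq]

lemma aux_memLp_condexp {Ω : Type*} {𝒢 : MeasurableSpace Ω} {ℱ : MeasurableSpace Ω}
    {P : Measure Ω} [IsProbabilityMeasure P] (hm : 𝒢 ≤ ℱ) {f : Ω → ℝ}
    (hf : MemLp f 2 P) : MemLp (P[f|𝒢]) 2 P := by
  haveI : SigmaFinite (P.trim hm) := by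
    haveI : IsFiniteMeasure (P.trim hm) := by
      constructor
      rw [trim_measurableSet_eq hm MeasurableSet.univ]
      exact measure_lt_top _ _
    infer_instance
  set F : Lp ℝ 2 P := hf.toLp f with hF
  have hFae : F =ᵐ[P] f := hf.coeFn_toLp
  set G : Lp ℝ 2 P := ↑(condExpL2 ℝ ℝ hm F) with hG
  have hGm : AEStronglyMeasurable[𝒢] (G : Ω → ℝ) P := aestronglyMeasurable_condExpL2 hm F
  have hae : (G : Ω → ℝ) =ᵐ[P] P[f|𝒢] := by
    refine ae_eq_condExp_of_forall_setIntegral_eq hm (hf.integrable one_le_two) ?_ ?_ hGm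
    · intro s hs hμs
      exact ((Lp.memLp G).integrable one_le_two).integrableOn
    · intro s hs hμs
      rw [hG, integral_condExpL2_eq hm F hs hμs.ne]
      exact setIntegral_congr_ae (hm s hs) (hFae.mono fun ω hω _ => hω)
  exact (Lp.memLp G).ae_eq hae

lemma aux_var_const_add {Ω : Type*} {mΩ : MeasurableSpace Ω} (P : Measure Ω)
    [IsProbabilityMeasure P] (c : ℝ) {f : Ω → ℝ} (hf : Integrable f P) :
    (∫ ω, ((c + f ω) - ∫ x, (c + f x) ∂P) * ((c + f ω) - ∫ x, (c + f x) ∂P) ∂P)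
      = ∫ ω, (f ω - ∫ x, f x ∂P) * (f ω - ∫ x, f x ∂P) ∂P := by
  have h : ∫ x, (c + f x) ∂P = c + ∫ x, f x ∂P := by
    rw [integral_add (integrable_const c) hf, integral_const]
    simp
  rw [h]
  refine integral_congr_ae (Filter.Eventually.of_forall fun ω => ?_)
  ring

/-- In the structural model `η = α + Σ_j B_j φ_j(ξ) + Σ_k Γ_k Z_k + ζ`, with
`ζ` independent of `(ξ, X, Z)`, mean 0 and variance `Ψ`, and `φ*_j = E[φ_j(ξ) | σ(X,Z)]`,
the residual variance of the step-two linear model satisfies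
`Var(η − Σ_j B_j φ*_j − Σ_k Γ_k Z_k) = Ψ + Var(Σ_j B_j (φ_j(ξ) − φ*_j))`. -/
theorem var_steptwo_residual {Ω : Type*} {ℱ : MeasurableSpace Ω} (P : Measure Ω)
    [IsProbabilityMeasure P] {h r q l : ℕ}
    (X : Ω → Fin h → ℝ) (Z : Ω → Fin r → ℝ) (ξ : Ω → Fin q → ℝ)
    (hX : Measurable X) (hZ : Measurable Z) (hξ : Measurable ξ)
    (φ : Fin l → (Fin q → ℝ) → ℝ) (hφ : ∀ j, Measurable (φ j))
    (α : ℝ) (B : Fin l → ℝ) (Γ : Fin r → ℝ) (ζ : Ω → ℝ) (Ψ : ℝ)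
    (𝒢 : MeasurableSpace Ω)
    (h𝒢 : 𝒢 = MeasurableSpace.comap (fun ω => (X ω, Z ω)) inferInstance)
    (hφL2 : ∀ j, MemLp (fun ω => φ j (ξ ω)) 2 P)
    (hZL2 : ∀ k, MemLp (fun ω => Z ω k) 2 P)
    (hζL2 : MemLp ζ 2 P)
    (hζindep : IndepFun ζ (fun ω => (ξ ω, X ω, Z ω)) P)
    (hζmean : ∫ ω, ζ ω ∂P = 0)
    (hζvar : var P ζ = Ψ)
    (φs : Fin l → Ω → ℝ)
    (hφs : ∀ j, φs j = P[fun ω => φ j (ξ ω)|𝒢])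
    (η : Ω → ℝ)
    (hη : η = fun ω => α + (∑ j, B j * φ j (ξ ω)) + (∑ k, Γ k * Z ω k) + ζ ω) :
    var P (fun ω => η ω - (∑ j, B j * φs j ω) - ∑ k, Γ k * Z ω k) =
      Ψ + var P (fun ω => ∑ j, B j * (φ j (ξ ω) - φs j ω)) := by
  have hm𝒢 : 𝒢 ≤ ℱ := by
    rw [h𝒢]
    exact (hX.prodMk hZ).comap_le
  set U : Ω → ℝ := fun ω => ∑ j, B j * (φ j (ξ ω) - φs j ω) with hU
  have hφsL2 : ∀ j, MemLp (φs j) 2 P := fun j => (hφs j) ▸ aux_memLp_condexp hm𝒢 (hφL2 j)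
  have hUL2 : MemLp U 2 P := by
    rw [hU]
    exact memLp_finset_sum _ fun j _ => (((hφL2 j).sub (hφsL2 j)).const_mul (B j))
  -- Independence of U and ζ
  set W : Ω → (Fin q → ℝ) × (Fin h → ℝ) × (Fin r → ℝ) := fun ω => (ξ ω, X ω, Z ω) with hW
  have hUmeas : Measurable[MeasurableSpace.comap W inferInstance] U := by
    have hWm : Measurable[MeasurableSpace.comap W inferInstance] W :=
      comap_measurable W
    have hξm : Measurable[MeasurableSpace.comap W inferInstance] ξ := measurable_fst.comp hWm
    have hXZm : Measurable[MeasurableSpace.comap W inferInstance] (fun ω => (X ω, Z ω)) :=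
      measurable_snd.comp hWm
    have h𝒢le : 𝒢 ≤ MeasurableSpace.comap W inferInstance := by
      rw [h𝒢]
      exact hXZm.comap_le
    have hφsm : ∀ j, Measurable[MeasurableSpace.comap W inferInstance] (φs j) := fun j => by
      rw [hφs j]
      exact (stronglyMeasurable_condExp.measurable).mono h𝒢le le_rfl
    exact Finset.measurable_sum _ fun j _ =>
      (measurable_const.mul (((hφ j).comp hξm).sub (hφsm j)))
  have hUζ : IndepFun U ζ P := by
    have h1 : IndepFun W ζ P := hζindep.symm
    rw [IndepFun_iff_Indep] at h1 ⊢
    exact indep_of_indep_of_le_left h1 hUmeas.comap_le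
  -- rewrite the residual
  have hres : (fun ω => η ω - (∑ j, B j * φs j ω) - ∑ k, Γ k * Z ω k)
      = fun ω => α + (U + ζ) ω := by
    funext ω
    simp only [hη, hU, Pi.add_apply, Finset.mul_sum, mul_sub, Finset.sum_sub_distrib]
    ring
  have hUζL2 : MemLp (U + ζ) 2 P := hUL2.add hζL2
  calc var P (fun ω => η ω - (∑ j, B j * φs j ω) - ∑ k, Γ k * Z ω k)
      = var P (fun ω => α + (U + ζ) ω) := by rw [hres]
    _ = var P (U + ζ) := by
        show (∫ ω, _ * _ ∂P) = ∫ ω, _ * _ ∂P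
        exact aux_var_const_add P α (hUζL2.integrable one_le_two)
    _ = variance (U + ζ) P := aux_var_eq_variance hUζL2
    _ = variance U P + variance ζ P := hUζ.variance_add hUL2 hζL2
    _ = var P U + var P ζ := by
        rw [← aux_var_eq_variance hUL2, ← aux_var_eq_variance hζL2]; rfl
    _ = Ψ + var P U := by rw [hζvar, add_comm]
end

section
/- In the structural model η = α + Σ_{j=1}^l B_j φ_j(ξ) + Σ_{k=1}^r Γ_k Z_k + ζ, with each φ_j(ξ) and each Z_k square-integrable, ζ square-integrable, independent of (ξ, X, Z), with mean 0, and with φ*_j := E[φ_j(ξ) | σ(X,Z)], the covariance between each predicted term and the latent outcome satisfies, for every j: Cov(φ*_j, η) = Σ_{j'=1}^l B_{j'} Cov(φ*_j, φ*_{j'}) + Σ_{k=1}^r Γ_k Cov(φ*_j, Z_k). -/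
open MeasureTheory ProbabilityTheory

section Aux

variable {α : Type*} {m m0 : MeasurableSpace α} {μ : Measure α}

lemma integrable_mul_of_memℒp_two {f g : α → ℝ} (hf : MemLp f 2 μ) (hg : MemLp g 2 μ) :
    Integrable (fun x => f x * g x) μ := by
  have h := L2.integrable_inner (𝕜 := ℝ) (hf.toLp f) (hg.toLp g)
  refine h.congr ?_
  filter_upwards [hf.coeFn_toLp, hg.coeFn_toLp] with x hx hy
  simp [hx, hy, RCLike.inner_apply, mul_comm]

lemma memℒp_two_condexp [IsFiniteMeasure μ] (hm : m ≤ m0) {f : α → ℝ} (hf : MemLp f 2 μ) :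
    MemLp (μ[f|m]) 2 μ := by
  set F := hf.toLp f with hF
  have hcond : (condExpL2 ℝ ℝ hm F : α → ℝ) =ᵐ[μ] μ[f|m] := by
    refine ae_eq_condExp_of_forall_setIntegral_eq hm (hf.integrable one_le_two)
      (fun s _ hμs => integrableOn_condExpL2_of_measure_ne_top hm hμs.ne _)
      (fun s hs hμs => ?_) (aestronglyMeasurable_condExpL2 hm F)
    rw [integral_condExpL2_eq hm F hs hμs.ne]
    exact setIntegral_congr_ae (hm s hs) (hf.coeFn_toLp.mono fun x hx _ => hx)
  exact (Lp.memLp (condExpL2 ℝ ℝ hm F : α →₂[μ] ℝ)).ae_eq hcond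

end Aux

lemma covar_eq_sub {Ω : Type*} {mΩ : MeasurableSpace Ω} (P : Measure Ω) [IsProbabilityMeasure P]
    {f g : Ω → ℝ} (hf : Integrable f P) (hg : Integrable g P)
    (hfg : Integrable (fun ω => f ω * g ω) P) :
    covar P f g = (∫ ω, f ω * g ω ∂P) - (∫ ω, f ω ∂P) * ∫ ω, g ω ∂P := by
  have hexp : ∀ ω, (f ω - ∫ x, f x ∂P) * (g ω - ∫ x, g x ∂P)
      = f ω * g ω - (∫ x, f x ∂P) * g ω - (∫ x, g x ∂P) * f ω
        + (∫ x, f x ∂P) * ∫ x, g x ∂P := fun ω => by ring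
  unfold covar
  simp_rw [hexp]
  have h1 : Integrable (fun ω => f ω * g ω - (∫ x, f x ∂P) * g ω) P := hfg.sub (hg.const_mul _)
  have h2 : Integrable (fun ω => f ω * g ω - (∫ x, f x ∂P) * g ω - (∫ x, g x ∂P) * f ω) P :=
    h1.sub (hf.const_mul _)
  rw [integral_add h2 (integrable_const _), integral_sub h1 (hf.const_mul _),
    integral_sub hfg (hg.const_mul _), integral_const_mul, integral_const_mul,
    integral_const, probReal_univ, smul_eq_mul, one_mul]
  ring

/-- In the structural model `η = α + Σ_j B_j φ_j(ξ) + Σ_k Γ_k Z_k + ζ`, with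
`ζ` independent of `(ξ, X, Z)` and mean 0, and `φ*_j = E[φ_j(ξ) | σ(X,Z)]`, for every `j`:
`Cov(φ*_j, η) = Σ_{j'} B_{j'} Cov(φ*_j, φ*_{j'}) + Σ_k Γ_k Cov(φ*_j, Z_k)`. -/
theorem covar_prediction_outcome {Ω : Type*} {ℱ : MeasurableSpace Ω} (P : Measure Ω)
    [IsProbabilityMeasure P] {h r q l : ℕ}
    (X : Ω → Fin h → ℝ) (Z : Ω → Fin r → ℝ) (ξ : Ω → Fin q → ℝ)
    (hX : Measurable X) (hZ : Measurable Z) (hξ : Measurable ξ)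
    (φ : Fin l → (Fin q → ℝ) → ℝ) (hφ : ∀ j, Measurable (φ j))
    (α : ℝ) (B : Fin l → ℝ) (Γ : Fin r → ℝ) (ζ : Ω → ℝ)
    (𝒢 : MeasurableSpace Ω)
    (h𝒢 : 𝒢 = MeasurableSpace.comap (fun ω => (X ω, Z ω)) inferInstance)
    (hφL2 : ∀ j, MemLp (fun ω => φ j (ξ ω)) 2 P)
    (hZL2 : ∀ k, MemLp (fun ω => Z ω k) 2 P)
    (hζL2 : MemLp ζ 2 P)
    (hζindep : IndepFun ζ (fun ω => (ξ ω, X ω, Z ω)) P)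
    (hζmean : ∫ ω, ζ ω ∂P = 0)
    (φs : Fin l → Ω → ℝ)
    (hφs : ∀ j, φs j = P[fun ω => φ j (ξ ω)|𝒢])
    (η : Ω → ℝ)
    (hη : η = fun ω => α + (∑ j, B j * φ j (ξ ω)) + (∑ k, Γ k * Z ω k) + ζ ω) :
    ∀ j, covar P (φs j) η =
      (∑ j', B j' * covar P (φs j) (φs j')) +
        ∑ k, Γ k * covar P (φs j) (fun ω => Z ω k) := by
  intro j
  have hm : 𝒢 ≤ ℱ := by rw [h𝒢]; exact (hX.prodMk hZ).comap_le
  haveI : SigmaFinite (P.trim hm) := inferInstance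
  -- L2 and integrability facts
  have hφsL2 : ∀ j', MemLp (φs j') 2 P := fun j' => by
    rw [hφs j']; exact memℒp_two_condexp hm (hφL2 j')
  have hfL2 : MemLp (φs j) 2 P := hφsL2 j
  have hfInt : Integrable (φs j) P := hfL2.integrable one_le_two
  have hφInt : ∀ j', Integrable (fun ω => φ j' (ξ ω)) P := fun j' =>
    (hφL2 j').integrable one_le_two
  have hZInt : ∀ k, Integrable (fun ω => Z ω k) P := fun k => (hZL2 k).integrable one_le_two
  have hζInt : Integrable ζ P := hζL2.integrable one_le_two
  have hfφInt : ∀ j', Integrable (fun ω => φs j ω * φ j' (ξ ω)) P := fun j' =>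
    integrable_mul_of_memℒp_two hfL2 (hφL2 j')
  have hfφsInt : ∀ j', Integrable (fun ω => φs j ω * φs j' ω) P := fun j' =>
    integrable_mul_of_memℒp_two hfL2 (hφsL2 j')
  have hfZInt : ∀ k, Integrable (fun ω => φs j ω * Z ω k) P := fun k =>
    integrable_mul_of_memℒp_two hfL2 (hZL2 k)
  have hfζInt : Integrable (fun ω => φs j ω * ζ ω) P := integrable_mul_of_memℒp_two hfL2 hζL2
  -- strong measurability of φs j w.r.t. 𝒢
  have hsm : StronglyMeasurable[𝒢] (φs j) := by rw [hφs j]; exact stronglyMeasurable_condExp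
  -- mean of φs j' equals mean of φ j' (ξ)
  have hmean : ∀ j', ∫ ω, φs j' ω ∂P = ∫ ω, φ j' (ξ ω) ∂P := fun j' => by
    rw [hφs j']; exact integral_condExp hm
  -- pull-out property
  have hpull : ∀ j', ∫ ω, φs j ω * φ j' (ξ ω) ∂P = ∫ ω, φs j ω * φs j' ω ∂P := by
    intro j'
    have hmul : P[(fun ω => φs j ω * φ j' (ξ ω))|𝒢]
        =ᵐ[P] fun ω => φs j ω * (P[fun ω' => φ j' (ξ ω')|𝒢]) ω :=
      condExp_mul_of_stronglyMeasurable_left hsm (hfφInt j') (hφInt j')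
    calc ∫ ω, φs j ω * φ j' (ξ ω) ∂P
        = ∫ ω, (P[(fun ω => φs j ω * φ j' (ξ ω))|𝒢]) ω ∂P := (integral_condExp hm).symm
      _ = ∫ ω, φs j ω * (P[fun ω' => φ j' (ξ ω')|𝒢]) ω ∂P := integral_congr_ae hmul
      _ = ∫ ω, φs j ω * φs j' ω ∂P := by rw [← hφs j']
  -- independence: φs j ⊥ ζ
  have hindep : IndepFun (φs j) ζ P := by
    have h1 : IndepFun ζ (fun ω => (X ω, Z ω)) P := by
      have := hζindep.comp measurable_id (measurable_snd)
      exact this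
    have h2 : Indep (MeasurableSpace.comap ζ inferInstance) 𝒢 P := by
      rw [h𝒢]; exact h1
    exact (indep_of_indep_of_le_right h2 hsm.measurable.comap_le).symm
  have hfζ : ∫ ω, φs j ω * ζ ω ∂P = 0 := by
    have hthis := hindep.integral_mul_eq_mul_integral hfInt.1 hζInt.1
    rw [show (fun ω => φs j ω * ζ ω) = φs j * ζ from rfl, hthis, hζmean, mul_zero]
  -- expand ∫ η
  have hηInt1 : Integrable (fun ω => ∑ j', B j' * φ j' (ξ ω)) P :=
    integrable_finset_sum _ fun j' _ => (hφInt j').const_mul _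
  have hηInt2 : Integrable (fun ω => ∑ k, Γ k * Z ω k) P :=
    integrable_finset_sum _ fun k _ => (hZInt k).const_mul _
  have hI2 : Integrable (fun ω => α + ∑ j', B j' * φ j' (ξ ω)) P := by
    exact (integrable_const α).add hηInt1
  have hI3 : Integrable (fun ω => α + (∑ j', B j' * φ j' (ξ ω)) + ∑ k, Γ k * Z ω k) P := by
    exact hI2.add hηInt2
  have hEη : ∫ ω, η ω ∂P
      = α + (∑ j', B j' * ∫ ω, φs j' ω ∂P) + ∑ k, Γ k * ∫ ω, Z ω k ∂P := by
    simp only [hη]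
    rw [integral_add hI3 hζInt, integral_add hI2 hηInt2,
      integral_add (integrable_const α) hηInt1,
      integral_const, probReal_univ, smul_eq_mul, one_mul,
      integral_finset_sum _ fun j' _ => (hφInt j').const_mul _,
      integral_finset_sum _ fun k _ => (hZInt k).const_mul _, hζmean, add_zero]
    simp_rw [integral_const_mul, hmean]
  -- expand ∫ φs j * η
  have hfηInt1 : Integrable (fun ω => ∑ j', B j' * (φs j ω * φ j' (ξ ω))) P :=
    integrable_finset_sum _ fun j' _ => (hfφInt j').const_mul _
  have hfηInt2 : Integrable (fun ω => ∑ k, Γ k * (φs j ω * Z ω k)) P :=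
    integrable_finset_sum _ fun k _ => (hfZInt k).const_mul _
  have hJ1 : Integrable (fun ω => α * φs j ω) P := hfInt.const_mul α
  have hJ2 : Integrable (fun ω => α * φs j ω + ∑ j', B j' * (φs j ω * φ j' (ξ ω))) P := by
    exact hJ1.add hfηInt1
  have hJ3 : Integrable (fun ω => α * φs j ω + (∑ j', B j' * (φs j ω * φ j' (ξ ω)))
      + ∑ k, Γ k * (φs j ω * Z ω k)) P := by
    exact hJ2.add hfηInt2
  have hexp : (fun ω => φs j ω * η ω)
      = fun ω => α * φs j ω + (∑ j', B j' * (φs j ω * φ j' (ξ ω)))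
        + (∑ k, Γ k * (φs j ω * Z ω k)) + φs j ω * ζ ω := by
    funext ω
    simp only [hη]
    have e1 : φs j ω * (∑ j', B j' * φ j' (ξ ω)) = ∑ j', B j' * (φs j ω * φ j' (ξ ω)) := by
      rw [Finset.mul_sum]; exact Finset.sum_congr rfl fun x _ => by ring
    have e2 : φs j ω * (∑ k, Γ k * Z ω k) = ∑ k, Γ k * (φs j ω * Z ω k) := by
      rw [Finset.mul_sum]; exact Finset.sum_congr rfl fun x _ => by ring
    simp only [mul_add]
    rw [e1, e2]; ring
  have hEfη : ∫ ω, φs j ω * η ω ∂P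
      = α * (∫ ω, φs j ω ∂P) + (∑ j', B j' * ∫ ω, φs j ω * φs j' ω ∂P)
        + ∑ k, Γ k * ∫ ω, φs j ω * Z ω k ∂P := by
    rw [hexp]
    rw [integral_add hJ3 hfζInt, integral_add hJ2 hfηInt2, integral_add hJ1 hfηInt1,
      integral_const_mul,
      integral_finset_sum _ fun j' _ => (hfφInt j').const_mul _,
      integral_finset_sum _ fun k _ => (hfZInt k).const_mul _, hfζ, add_zero]
    simp_rw [integral_const_mul, hpull]
  -- integrability of η and φs j * η
  have hS1 : MemLp (fun ω => ∑ j', B j' * φ j' (ξ ω)) 2 P := by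
    have hs := memLp_finset_sum' (μ := P) (p := 2) Finset.univ
      (fun j' (_ : j' ∈ Finset.univ) => (hφL2 j').const_mul (B j'))
    refine hs.ae_eq (Filter.Eventually.of_forall fun ω => ?_)
    simp [Finset.sum_apply]
  have hS2 : MemLp (fun ω => ∑ k, Γ k * Z ω k) 2 P := by
    have hs := memLp_finset_sum' (μ := P) (p := 2) Finset.univ
      (fun k (_ : k ∈ Finset.univ) => (hZL2 k).const_mul (Γ k))
    refine hs.ae_eq (Filter.Eventually.of_forall fun ω => ?_)
    simp [Finset.sum_apply]
  have hηL2 : MemLp η 2 P := by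
    rw [hη]
    exact (((memLp_const α).add hS1).add hS2).add hζL2
  have hfηInt : Integrable (fun ω => φs j ω * η ω) P := integrable_mul_of_memℒp_two hfL2 hηL2
  have hηInt : Integrable η P := hηL2.integrable one_le_two
  -- put everything together
  rw [covar_eq_sub P hfInt hηInt hfηInt, hEfη, hEη]
  have hR1 : ∀ j', covar P (φs j) (φs j')
      = (∫ ω, φs j ω * φs j' ω ∂P) - (∫ ω, φs j ω ∂P) * ∫ ω, φs j' ω ∂P := fun j' =>
    covar_eq_sub P hfInt ((hφsL2 j').integrable one_le_two) (hfφsInt j')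
  have hR2 : ∀ k, covar P (φs j) (fun ω => Z ω k)
      = (∫ ω, φs j ω * Z ω k ∂P) - (∫ ω, φs j ω ∂P) * ∫ ω, Z ω k ∂P := fun k =>
    covar_eq_sub P hfInt (hZInt k) (hfZInt k)
  have e1 : (∑ j', B j' * covar P (φs j) (φs j'))
      = (∑ j', B j' * ∫ ω, φs j ω * φs j' ω ∂P)
        - (∫ ω, φs j ω ∂P) * ∑ j', B j' * ∫ ω, φs j' ω ∂P := by
    rw [Finset.mul_sum, ← Finset.sum_sub_distrib]
    exact Finset.sum_congr rfl fun j' _ => by rw [hR1 j']; ring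
  have e2 : (∑ k, Γ k * covar P (φs j) (fun ω => Z ω k))
      = (∑ k, Γ k * ∫ ω, φs j ω * Z ω k ∂P)
        - (∫ ω, φs j ω ∂P) * ∑ k, Γ k * ∫ ω, Z ω k ∂P := by
    rw [Finset.mul_sum, ← Finset.sum_sub_distrib]
    exact Finset.sum_congr rfl fun k _ => by rw [hR2 k]; ring
  rw [e1, e2]
  ring
end

section
/- Let (ξ, X) be a jointly multivariate Gaussian random vector on ℝ^q × ℝ^h with mean (μ_ξ, μ_X) and positive definite covariance matrix Σ with blocks Σ_ξ, Σ_{ξX}, Σ_{Xξ}, Σ_X. Then for each coordinate a = 1,…,q, the conditional expectation of ξ_a given σ(X) equals, almost surely, the a-th coordinate of the affine function μ_ξ + Σ_{ξX} Σ_X^{-1} (X − μ_X); that is, E[ξ_a | σ(X)] = μ_{ξ,a} + (Σ_{ξX} Σ_X^{-1} (X − μ_X))_a almost surely. -/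
open MeasureTheory ProbabilityTheory Matrix
open scoped ENNReal NNReal

set_option linter.unusedSectionVars false
set_option linter.unusedVariables false
set_option maxHeartbeats 1000000

/-- The multivariate Gaussian measure on `ι → ℝ` with mean vector `μ` and (positive
definite) covariance matrix `S`, defined by its Lebesgue density
`x ↦ ((2π)^card ι · det S)^(-1/2) · exp(−½ ⟨x−μ, S⁻¹ (x−μ)⟩)`. -/
noncomputable def multivariateGaussian {ι : Type*} [Fintype ι] [DecidableEq ι]
    (μ : ι → ℝ) (S : Matrix ι ι ℝ) : Measure (ι → ℝ) :=
  volume.withDensity fun x =>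
    ENNReal.ofReal (Real.sqrt (((2 * Real.pi) ^ Fintype.card ι * S.det)⁻¹) *
      Real.exp (-(1 / 2) * dotProduct (x - μ) (S⁻¹ *ᵥ (x - μ))))

section Aux
variable {ι : Type*} [Fintype ι] [DecidableEq ι]

lemma continuous_qf (M : Matrix ι ι ℝ) (μ0 : ι → ℝ) :
    Continuous fun z : ι → ℝ => (z - μ0) ⬝ᵥ M *ᵥ (z - μ0) := by
  simp only [dotProduct, mulVec, Pi.sub_apply]
  refine continuous_finset_sum _ fun i _ => Continuous.mul (by fun_prop) ?_
  exact continuous_finset_sum _ fun j _ => Continuous.mul (by fun_prop) (by fun_prop)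

lemma dotProduct_self_nonneg' (w : ι → ℝ) : 0 ≤ w ⬝ᵥ w :=
  Finset.sum_nonneg fun i _ => mul_self_nonneg _

lemma coercive {M : Matrix ι ι ℝ} (hM : M.PosDef) :
    ∃ c > 0, ∀ w : ι → ℝ, c * (w ⬝ᵥ w) ≤ w ⬝ᵥ M *ᵥ w := by
  cases isEmpty_or_nonempty ι with
  | inl hι =>
      refine ⟨1, one_pos, fun w => ?_⟩
      simp [dotProduct]
  | inr hι =>
      have hf : Continuous fun w : ι → ℝ => w ⬝ᵥ M *ᵥ w := by
        simpa using continuous_qf M 0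
      have hg : Continuous fun w : ι → ℝ => w ⬝ᵥ w := by
        have := continuous_qf (1 : Matrix ι ι ℝ) 0
        simpa using this
      set S : Set (ι → ℝ) := {w | w ⬝ᵥ w = 1} with hS
      have hSc : IsCompact S := by
        refine Metric.isCompact_of_isClosed_isBounded (isClosed_eq hg continuous_const) ?_
        refine (Metric.isBounded_iff_subset_closedBall 0).2 ⟨1, fun w hw => ?_⟩
        have hw1 : w ⬝ᵥ w = 1 := hw
        have : ∀ i, ‖w i‖ ≤ 1 := by
          intro i
          have h1 : w i * w i ≤ 1 := by
            rw [← hw1]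
            exact Finset.single_le_sum (f := fun j => w j * w j)
              (fun j _ => mul_self_nonneg _) (Finset.mem_univ i)
          rw [Real.norm_eq_abs]
          nlinarith [abs_nonneg (w i), abs_mul_abs_self (w i)]
        simpa [Metric.mem_closedBall, dist_zero_right, pi_norm_le_iff_of_nonneg (zero_le_one)]
          using this
      have hne : S.Nonempty := by
        obtain ⟨i0⟩ := hι
        refine ⟨Pi.single i0 1, ?_⟩
        simp [hS, dotProduct, Pi.single_apply]
      obtain ⟨w0, hw0S, hw0min⟩ := hSc.exists_isMinOn hne hf.continuousOn
      have hw0ne : w0 ≠ 0 := by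
        intro hcon
        rw [hcon] at hw0S
        simp [hS, dotProduct] at hw0S
      refine ⟨w0 ⬝ᵥ M *ᵥ w0, ?_, fun w => ?_⟩
      · have := hM.dotProduct_mulVec_pos hw0ne
        simpa using this
      · rcases eq_or_ne w 0 with rfl | hw
        · simp
        · have hww : 0 < w ⬝ᵥ w := by
            rcases lt_or_eq_of_le (dotProduct_self_nonneg' w) with h | h
            · exact h
            · exact absurd (dotProduct_self_eq_zero.1 h.symm) hw
          set t : ℝ := Real.sqrt (w ⬝ᵥ w) with ht
          have htpos : 0 < t := Real.sqrt_pos.2 hww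
          have ht2 : t * t = w ⬝ᵥ w := Real.mul_self_sqrt hww.le
          have hu : (t⁻¹ • w) ⬝ᵥ (t⁻¹ • w) = 1 := by
            rw [smul_dotProduct, dotProduct_smul, smul_eq_mul, smul_eq_mul, ← ht2]
            field_simp
          have humem : (t⁻¹ • w) ∈ S := hu
          have hmin := hw0min humem
          have hval : (t⁻¹ • w) ⬝ᵥ M *ᵥ (t⁻¹ • w) = t⁻¹ * (t⁻¹ * (w ⬝ᵥ M *ᵥ w)) := by
            rw [Matrix.mulVec_smul, smul_dotProduct, dotProduct_smul, smul_eq_mul, smul_eq_mul]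
          have : w0 ⬝ᵥ M *ᵥ w0 ≤ t⁻¹ * (t⁻¹ * (w ⬝ᵥ M *ᵥ w)) := by
            simpa [hval] using hmin
          have h' := mul_le_mul_of_nonneg_left this (le_of_lt (mul_pos htpos htpos))
          calc (w0 ⬝ᵥ M *ᵥ w0) * (w ⬝ᵥ w) = t * t * (w0 ⬝ᵥ M *ᵥ w0) := by rw [ht2]; ring
            _ ≤ t * t * (t⁻¹ * (t⁻¹ * (w ⬝ᵥ M *ᵥ w))) := h'
            _ = w ⬝ᵥ M *ᵥ w := by field_simp
end Aux
open MeasureTheory Matrix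

section Aux2
variable {ι : Type*} [Fintype ι] [DecidableEq ι]

lemma exp_dot_prod (c' : ℝ) (w : ι → ℝ) :
    Real.exp (-c' * (w ⬝ᵥ w)) = ∏ j, Real.exp (-c' * (w j * w j)) := by
  rw [← Real.exp_sum]
  congr 1
  rw [dotProduct, Finset.mul_sum]

lemma integrable_gauss_weight {c' : ℝ} (hc' : 0 < c') (C : ℝ) (c : ι → ℝ) :
    Integrable (fun w : ι → ℝ => (C + ∑ i, c i * |w i|) * Real.exp (-c' * (w ⬝ᵥ w))) := by
  have h1d : Integrable (fun t : ℝ => Real.exp (-c' * (t * t))) := by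
    simpa [sq] using integrable_exp_neg_mul_sq hc'
  have h1da : Integrable (fun t : ℝ => |t| * Real.exp (-c' * (t * t))) := by
    have := (integrable_mul_exp_neg_mul_sq hc').abs
    refine this.congr ?_
    filter_upwards with t
    rw [abs_mul, abs_of_pos (Real.exp_pos _), sq]
  have h1 : Integrable (fun w : ι → ℝ => Real.exp (-c' * (w ⬝ᵥ w))) := by
    simp_rw [exp_dot_prod]
    exact Integrable.fintype_prod (f := fun _ t => Real.exp (-c' * (t * t))) fun i => h1d
  have h2 : ∀ i : ι, Integrable (fun w : ι → ℝ => |w i| * Real.exp (-c' * (w ⬝ᵥ w))) := by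
    intro i
    have key : (fun w : ι → ℝ => |w i| * Real.exp (-c' * (w ⬝ᵥ w)))
        = fun w : ι → ℝ => ∏ j, (if j = i then |w j| else 1) * Real.exp (-c' * (w j * w j)) := by
      funext w
      rw [Finset.prod_mul_distrib, Finset.prod_ite_eq', if_pos (Finset.mem_univ i),
        ← exp_dot_prod]
    rw [key]
    refine Integrable.fintype_prod
      (f := fun j t => (if j = i then |t| else 1) * Real.exp (-c' * (t * t))) fun j => ?_
    by_cases hji : j = i
    · simpa [hji] using h1da
    · simpa [hji] using h1d
  have := (h1.const_mul C).add (integrable_finset_sum Finset.univ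
    (fun i (_ : i ∈ Finset.univ) => (h2 i).const_mul (c i)))
  refine this.congr ?_
  filter_upwards with w
  simp only [Pi.add_apply]
  rw [add_mul, Finset.sum_mul]
  congr 1
  exact (Finset.sum_congr rfl fun i _ => by ring)

lemma integrable_mul_gauss {M : Matrix ι ι ℝ} (hM : M.PosDef) (μ0 : ι → ℝ)
    {φ : (ι → ℝ) → ℝ} (hφm : AEStronglyMeasurable φ (volume : Measure (ι → ℝ)))
    {C : ℝ} {c : ι → ℝ}
    (hbound : ∀ z, |φ z| ≤ C + ∑ i, c i * |z i - μ0 i|) :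
    Integrable (fun z : ι → ℝ =>
      φ z * Real.exp (-(1/2) * ((z - μ0) ⬝ᵥ M *ᵥ (z - μ0)))) := by
  obtain ⟨c₀, hc₀, hco⟩ := coercive hM
  have hG := integrable_gauss_weight (half_pos hc₀) C c
  have hGt : Integrable (fun z : ι → ℝ =>
      (C + ∑ i, c i * |z i - μ0 i|) * Real.exp (-(c₀/2) * ((z - μ0) ⬝ᵥ (z - μ0)))) := by
    have := hG.comp_sub_right (g := μ0)
    simpa using this
  have hcont : Continuous fun z : ι → ℝ =>
      Real.exp (-(1/2) * ((z - μ0) ⬝ᵥ M *ᵥ (z - μ0))) :=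
    Real.continuous_exp.comp ((continuous_const.mul (continuous_qf M μ0)))
  refine hGt.mono' (hφm.mul hcont.aestronglyMeasurable) ?_
  filter_upwards with z
  rw [norm_mul, Real.norm_eq_abs, Real.norm_eq_abs, abs_of_pos (Real.exp_pos _)]
  have h0 : (0:ℝ) ≤ C + ∑ i, c i * |z i - μ0 i| := le_trans (abs_nonneg _) (hbound z)
  refine mul_le_mul (hbound z) ?_ (Real.exp_pos _).le h0
  rw [Real.exp_le_exp]
  have := hco (z - μ0)
  nlinarith [this]

lemma integral_odd_gauss (M : Matrix ι ι ℝ) (a : ι) :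
    ∫ u : ι → ℝ, u a * Real.exp (-(1/2) * (u ⬝ᵥ M *ᵥ u)) = 0 := by
  set f : (ι → ℝ) → ℝ := fun u => u a * Real.exp (-(1/2) * (u ⬝ᵥ M *ᵥ u)) with hf
  have hodd : ∀ u : ι → ℝ, f (-u) = - f u := by
    intro u
    simp only [hf, Pi.neg_apply, Matrix.mulVec_neg, neg_dotProduct,
      dotProduct_neg, neg_neg, neg_mul]
  have h1 : ∫ u, f (-u) = ∫ u, f u := integral_neg_eq_self f (volume : Measure (ι → ℝ))
  have h2 : ∫ u, f (-u) = - ∫ u, f u := by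
    simp_rw [hodd]
    exact integral_neg f
  linarith [h1, h2]
end Aux2


section MatAux
variable {m n : Type*} [Fintype m] [Fintype n] [DecidableEq m] [DecidableEq n]
variable {A : Matrix m m ℝ} {B : Matrix m n ℝ} {D : Matrix n n ℝ}

lemma starTriv {κ : Type*} (w : κ → ℝ) : star w = w := funext fun _ => rfl

lemma blocksHerm (hpos : (fromBlocks A B Bᵀ D).PosDef) :
    A.IsHermitian ∧ D.IsHermitian := by
  have h := hpos.1
  rw [isHermitian_fromBlocks_iff] at h
  exact ⟨h.1, h.2.2.2⟩

lemma posDef_D (hpos : (fromBlocks A B Bᵀ D).PosDef) : D.PosDef := by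
  refine Matrix.PosDef.of_dotProduct_mulVec_pos (blocksHerm hpos).2 fun v hv => ?_
  have hx : Sum.elim (0 : m → ℝ) v ≠ 0 := by
    intro hcon
    exact hv (funext fun j => congrFun hcon (Sum.inr j))
  have := hpos.dotProduct_mulVec_pos hx
  simpa [fromBlocks_mulVec, sumElim_dotProduct_sumElim, Matrix.mulVec_zero] using this

lemma posDef_schur (hpos : (fromBlocks A B Bᵀ D).PosDef) :
    (A - B * D⁻¹ * Bᵀ).PosDef := by
  have hD := posDef_D hpos
  haveI : Invertible D := hD.isUnit.invertible
  have hBt : Bᵀ = Bᴴ := (conjTranspose_eq_transpose_of_trivial B).symm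
  have hherm : (A - B * D⁻¹ * Bᵀ).IsHermitian := by
    rw [hBt]
    exact (IsHermitian.fromBlocks₂₂ A B hD.1).1 (by rw [← hBt]; exact hpos.1)
  refine Matrix.PosDef.of_dotProduct_mulVec_pos hherm fun u hu => ?_
  set y : n → ℝ := -((D⁻¹ * Bᴴ) *ᵥ u) with hy
  have hx : Sum.elim u y ≠ 0 := by
    intro hcon
    exact hu (funext fun i => congrFun hcon (Sum.inl i))
  have hkey := schur_complement_eq₂₂ (B := B) (D := D) A u y hD.1
  have h2 := hpos.dotProduct_mulVec_pos hx
  rw [dotProduct_mulVec, hBt] at h2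
  rw [hkey] at h2
  have hz : (D⁻¹ * Bᴴ) *ᵥ u + y = 0 := by rw [hy]; simp
  rw [hz] at h2
  simp only [starTriv, Matrix.zero_vecMul, zero_dotProduct, zero_add] at h2
  rw [← Matrix.dotProduct_mulVec, ← hBt] at h2
  simp only [starTriv]
  exact h2

lemma inv_fromBlocks (hpos : (fromBlocks A B Bᵀ D).PosDef) :
    (fromBlocks A B Bᵀ D)⁻¹ =
      fromBlocks (A - B * D⁻¹ * Bᵀ)⁻¹ (-((A - B * D⁻¹ * Bᵀ)⁻¹ * B * D⁻¹))
        (-(D⁻¹ * Bᵀ * (A - B * D⁻¹ * Bᵀ)⁻¹))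
        (D⁻¹ + D⁻¹ * Bᵀ * (A - B * D⁻¹ * Bᵀ)⁻¹ * B * D⁻¹) := by
  have hD := posDef_D hpos
  have hS := posDef_schur hpos
  haveI iD : Invertible D := hD.isUnit.invertible
  haveI iS : Invertible (A - B * D⁻¹ * Bᵀ) := hS.isUnit.invertible
  haveI iS' : Invertible (A - B * ⅟D * Bᵀ) := by
    rwa [invOf_eq_nonsing_inv]
  haveI iSig : Invertible (fromBlocks A B Bᵀ D) := fromBlocks₂₂Invertible A B Bᵀ D
  have hinvD : ⅟D = D⁻¹ := invOf_eq_nonsing_inv D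
  have h1 : (⅟(A - B * ⅟D * Bᵀ) : Matrix m m ℝ) = (A - B * D⁻¹ * Bᵀ)⁻¹ := by
    rw [invOf_eq_nonsing_inv, hinvD]
  rw [← invOf_eq_nonsing_inv (fromBlocks A B Bᵀ D), invOf_fromBlocks₂₂_eq A B Bᵀ D,
    h1, hinvD]

lemma qf_decomp (hpos : (fromBlocks A B Bᵀ D).PosDef) (u : m → ℝ) (v : n → ℝ) :
    Sum.elim u v ⬝ᵥ (fromBlocks A B Bᵀ D)⁻¹ *ᵥ Sum.elim u v
      = (u - (B * D⁻¹) *ᵥ v) ⬝ᵥ (A - B * D⁻¹ * Bᵀ)⁻¹ *ᵥ (u - (B * D⁻¹) *ᵥ v)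
        + v ⬝ᵥ D⁻¹ *ᵥ v := by
  have hD := posDef_D hpos
  have hS := posDef_schur hpos
  haveI iD : Invertible D := hD.isUnit.invertible
  haveI iS : Invertible (A - B * D⁻¹ * Bᵀ) := hS.isUnit.invertible
  haveI iSi : Invertible (A - B * D⁻¹ * Bᵀ)⁻¹ :=
    (Matrix.isUnit_nonsing_inv_iff.2 hS.isUnit).invertible
  have hSich : ((A - B * D⁻¹ * Bᵀ)⁻¹).IsHermitian := hS.1.inv
  have hBt : Bᴴ = Bᵀ := conjTranspose_eq_transpose_of_trivial B
  have hkeyT : (-((A - B * D⁻¹ * Bᵀ)⁻¹ * B * D⁻¹))ᴴ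
      = -(D⁻¹ * Bᵀ * (A - B * D⁻¹ * Bᵀ)⁻¹) := by
    rw [conjTranspose_neg, conjTranspose_mul, conjTranspose_mul,
      conjTranspose_nonsing_inv, hD.1.eq, hBt, hSich.eq]
    simp [Matrix.mul_assoc]
  have hschur := schur_complement_eq₁₁ (A := (A - B * D⁻¹ * Bᵀ)⁻¹)
    (-((A - B * D⁻¹ * Bᵀ)⁻¹ * B * D⁻¹))
    (D⁻¹ + D⁻¹ * Bᵀ * (A - B * D⁻¹ * Bᵀ)⁻¹ * B * D⁻¹) u v hSich
  rw [hkeyT] at hschur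
  simp only [starTriv] at hschur
  have h1 : ((A - B * D⁻¹ * Bᵀ)⁻¹)⁻¹ * (-((A - B * D⁻¹ * Bᵀ)⁻¹ * B * D⁻¹))
      = -(B * D⁻¹) := by
    rw [Matrix.inv_inv_of_invertible, Matrix.mul_neg, ← Matrix.mul_assoc,
      Matrix.mul_inv_cancel_left_of_invertible]
  have h2 : D⁻¹ + D⁻¹ * Bᵀ * (A - B * D⁻¹ * Bᵀ)⁻¹ * B * D⁻¹
      - -(D⁻¹ * Bᵀ * (A - B * D⁻¹ * Bᵀ)⁻¹) * ((A - B * D⁻¹ * Bᵀ)⁻¹)⁻¹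
        * (-((A - B * D⁻¹ * Bᵀ)⁻¹ * B * D⁻¹)) = D⁻¹ := by
    set Sc : Matrix m m ℝ := A - B * D⁻¹ * Bᵀ with hScdef
    simp only [Matrix.inv_inv_of_invertible, Matrix.mul_neg, Matrix.neg_mul, neg_neg,
      Matrix.mul_assoc, Matrix.mul_inv_cancel_left_of_invertible]
    exact add_sub_cancel_right _ _
  rw [Matrix.dotProduct_mulVec, inv_fromBlocks hpos, hschur, h1, h2,
    Matrix.neg_mulVec, ← sub_eq_add_neg, ← Matrix.dotProduct_mulVec,
    ← Matrix.dotProduct_mulVec]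

lemma gauss_inner_zero (hpos : (fromBlocks A B Bᵀ D).PosDef)
    (μ1 : m → ℝ) (μ2 : n → ℝ) (a : m) (K : ℝ) (ψ : (n → ℝ) → ℝ)
    (hFint : Integrable (fun z : (m ⊕ n) → ℝ =>
      ((z (Sum.inl a) - (μ1 a + ((B * D⁻¹) *ᵥ ((fun j => z (Sum.inr j)) - μ2)) a))
          * ψ (fun j => z (Sum.inr j)))
        * (K * Real.exp (-(1/2) * ((z - Sum.elim μ1 μ2) ⬝ᵥ
            (fromBlocks A B Bᵀ D)⁻¹ *ᵥ (z - Sum.elim μ1 μ2))))) volume) :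
    ∫ z : (m ⊕ n) → ℝ,
      ((z (Sum.inl a) - (μ1 a + ((B * D⁻¹) *ᵥ ((fun j => z (Sum.inr j)) - μ2)) a))
          * ψ (fun j => z (Sum.inr j)))
        * (K * Real.exp (-(1/2) * ((z - Sum.elim μ1 μ2) ⬝ᵥ
            (fromBlocks A B Bᵀ D)⁻¹ *ᵥ (z - Sum.elim μ1 μ2)))) = 0 := by
  set F : ((m ⊕ n) → ℝ) → ℝ := fun z =>
      ((z (Sum.inl a) - (μ1 a + ((B * D⁻¹) *ᵥ ((fun j => z (Sum.inr j)) - μ2)) a))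
          * ψ (fun j => z (Sum.inr j)))
        * (K * Real.exp (-(1/2) * ((z - Sum.elim μ1 μ2) ⬝ᵥ
            (fromBlocks A B Bᵀ D)⁻¹ *ᵥ (z - Sum.elim μ1 μ2)))) with hF
  set e := MeasurableEquiv.sumPiEquivProdPi (fun _ : m ⊕ n => ℝ) with he
  have hMP := MeasureTheory.volume_measurePreserving_sumPiEquivProdPi_symm
    (fun _ : m ⊕ n => ℝ)
  have hsymm : ∀ p : (m → ℝ) × (n → ℝ), e.symm p = Sum.elim p.1 p.2 := by
    intro p; funext i; cases i <;> rfl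
  have step1 : ∫ z, F z = ∫ p : (m → ℝ) × (n → ℝ), F (Sum.elim p.1 p.2) := by
    rw [← hMP.integral_comp e.symm.measurableEmbedding F]
    congr 1
  have hFint' : Integrable (fun p : (m → ℝ) × (n → ℝ) => F (Sum.elim p.1 p.2))
      (volume.prod volume) := by
    rw [← Measure.volume_eq_prod]
    have h2 : Integrable (F ∘ e.symm) volume :=
      (hMP.integrable_comp_emb e.symm.measurableEmbedding).2 hFint
    refine h2.congr ?_
    filter_upwards with p
    rw [Function.comp_apply, hsymm]
  have step2 : ∫ p : (m → ℝ) × (n → ℝ), F (Sum.elim p.1 p.2)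
      = ∫ x : n → ℝ, ∫ y : m → ℝ, F (Sum.elim y x) := by
    rw [Measure.volume_eq_prod]
    exact integral_prod_symm _ hFint'
  have inner_zero : ∀ x : n → ℝ, (∫ y : m → ℝ, F (Sum.elim y x)) = 0 := by
    intro x
    set mx : m → ℝ := μ1 + (B * D⁻¹) *ᵥ (x - μ2) with hmx
    have hrw : ∀ y : m → ℝ, F (Sum.elim y x)
        = (ψ x * K * Real.exp (-(1/2) * ((x - μ2) ⬝ᵥ D⁻¹ *ᵥ (x - μ2))))
          * ((y a - mx a) * Real.exp (-(1/2) *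
              ((y - mx) ⬝ᵥ (A - B * D⁻¹ * Bᵀ)⁻¹ *ᵥ (y - mx)))) := by
      intro y
      have f3 : Sum.elim y x - Sum.elim μ1 μ2 = Sum.elim (y - μ1) (x - μ2) := by
        funext i; cases i <;> simp
      have f4 : (y - μ1) - (B * D⁻¹) *ᵥ (x - μ2) = y - mx := by
        funext i; simp [hmx, sub_sub]
      have hψx : (fun j => Sum.elim y x (Sum.inr j)) = x := rfl
      simp only [hF, hψx, Sum.elim_inl, f3, qf_decomp hpos (y - μ1) (x - μ2), f4]
      rw [mul_add, Real.exp_add]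
      have hmxa : μ1 a + ((B * D⁻¹) *ᵥ (x - μ2)) a = mx a := by simp [hmx]
      rw [hmxa]
      ring
    simp_rw [hrw]
    rw [integral_const_mul]
    have htrans := integral_add_right_eq_self (μ := (volume : Measure (m → ℝ)))
      (fun y : m → ℝ => (y a - mx a) * Real.exp (-(1/2) *
        ((y - mx) ⬝ᵥ (A - B * D⁻¹ * Bᵀ)⁻¹ *ᵥ (y - mx)))) mx
    have hsimp : (fun y : m → ℝ => ((y + mx) a - mx a) * Real.exp (-(1/2) *
        (((y + mx) - mx) ⬝ᵥ (A - B * D⁻¹ * Bᵀ)⁻¹ *ᵥ ((y + mx) - mx))))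
        = fun y : m → ℝ => y a * Real.exp (-(1/2) *
            (y ⬝ᵥ (A - B * D⁻¹ * Bᵀ)⁻¹ *ᵥ y)) := by
      funext y
      simp [add_sub_cancel_right]
    rw [hsimp] at htrans
    rw [← htrans, integral_odd_gauss _ a, mul_zero]
  rw [step1, step2]
  simp [inner_zero]

end MatAux


/-- If `(ξ, X)` is jointly Gaussian with mean `(μ_ξ, μ_X)` and positive
definite covariance matrix with blocks `Σ_ξ, Σ_{ξX}, Σ_{Xξ}, Σ_X`, then for each
coordinate `a`, `E[ξ_a | σ(X)] = μ_{ξ,a} + (Σ_{ξX} Σ_X⁻¹ (X − μ_X))_a` a.s. -/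
theorem condexp_gaussian_linear {Ω : Type*} {ℱ : MeasurableSpace Ω} (P : Measure Ω)
    [IsProbabilityMeasure P] {q h : ℕ}
    (ξ : Ω → Fin q → ℝ) (X : Ω → Fin h → ℝ) (hξ : Measurable ξ) (hX : Measurable X)
    (μξ : Fin q → ℝ) (μX : Fin h → ℝ)
    (Sξ : Matrix (Fin q) (Fin q) ℝ) (SξX : Matrix (Fin q) (Fin h) ℝ)
    (SXξ : Matrix (Fin h) (Fin q) ℝ) (SX : Matrix (Fin h) (Fin h) ℝ)
    (hT : SXξ = SξXᵀ)
    (hpos : (Matrix.fromBlocks Sξ SξX SXξ SX).PosDef)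
    (hlaw : P.map (fun ω => Sum.elim (ξ ω) (X ω)) =
      multivariateGaussian (Sum.elim μξ μX) (Matrix.fromBlocks Sξ SξX SXξ SX)) :
    ∀ a : Fin q,
      P[fun ω => ξ ω a | MeasurableSpace.comap X inferInstance] =ᵐ[P]
        fun ω => μξ a + ((SξX * SX⁻¹) *ᵥ (X ω - μX)) a := by
  subst hT
  intro a
  have hm : MeasurableSpace.comap X inferInstance ≤ ℱ := hX.comap_le
  haveI : SigmaFinite (P.trim hm) := inferInstance
  -- notation
  set ι := (Fin q ⊕ Fin h) with hι
  set Sig : Matrix ι ι ℝ := Matrix.fromBlocks Sξ SξX SξXᵀ SX with hSig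
  set μ0 : ι → ℝ := Sum.elim μξ μX with hμ0
  set K : ℝ := Real.sqrt (((2 * Real.pi) ^ Fintype.card ι * Sig.det)⁻¹) with hK
  set ρ : (ι → ℝ) → ℝ :=
    fun z => K * Real.exp (-(1/2) * ((z - μ0) ⬝ᵥ Sig⁻¹ *ᵥ (z - μ0))) with hρ
  set Z : Ω → ι → ℝ := fun ω => Sum.elim (ξ ω) (X ω) with hZdef
  set Am : Matrix (Fin q) (Fin h) ℝ := SξX * SX⁻¹ with hAm
  set g : (Fin h → ℝ) → ℝ := fun x => μξ a + (Am *ᵥ (x - μX)) a with hgdef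
  -- basic facts
  have hSiginv : (Sig⁻¹).PosDef := hpos.inv
  have hZ : Measurable Z := by
    refine measurable_pi_lambda _ fun i => ?_
    cases i with
    | inl i => exact (measurable_pi_apply i).comp hξ
    | inr j => exact (measurable_pi_apply j).comp hX
  have hν : P.map Z = volume.withDensity fun z => ENNReal.ofReal (ρ z) := by
    rw [hlaw]; rfl
  have hρm : Measurable ρ :=
    (continuous_const.mul (Real.continuous_exp.comp
      (continuous_const.mul (continuous_qf Sig⁻¹ μ0)))).measurable
  have hρ0 : ∀ z, 0 ≤ ρ z := fun z => mul_nonneg (Real.sqrt_nonneg _) (Real.exp_pos _).le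
  -- conversion between P-integrals and density integrals
  have conv : ∀ φ : (ι → ℝ) → ℝ, Measurable φ →
      Integrable (fun z => φ z * ρ z) volume →
      Integrable (fun ω => φ (Z ω)) P ∧ ∫ ω, φ (Z ω) ∂P = ∫ z, φ z * ρ z := by
    intro φ hφ hint
    have h1 : Integrable φ (P.map Z) := by
      rw [hν, integrable_withDensity_iff hρm.ennreal_ofReal
        (ae_of_all _ fun z => ENNReal.ofReal_lt_top)]
      exact hint.congr (by filter_upwards with z; rw [ENNReal.toReal_ofReal (hρ0 z)])
    refine ⟨(integrable_map_measure hφ.aestronglyMeasurable hZ.aemeasurable).1 h1, ?_⟩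
    rw [← integral_map hZ.aemeasurable hφ.aestronglyMeasurable, hν]
    have hrw : (volume.withDensity fun z => ENNReal.ofReal (ρ z))
        = volume.withDensity fun z => ((ρ z).toNNReal : ℝ≥0∞) := rfl
    rw [hrw, integral_withDensity_eq_integral_smul hρm.real_toNNReal φ]
    congr 1; funext z
    simp [NNReal.smul_def, Real.coe_toNNReal _ (hρ0 z), mul_comm, smul_eq_mul]
  -- master integrability
  have master : ∀ (φ : (ι → ℝ) → ℝ), Measurable φ →
      ∀ (C : ℝ) (c : ι → ℝ), (∀ z, |φ z| ≤ C + ∑ i, c i * |z i - μ0 i|) →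
      Integrable (fun z => φ z * ρ z) volume := by
    intro φ hφ C c hb
    have h := integrable_mul_gauss hSiginv μ0
      (φ := fun z => K * φ z) ((hφ.const_mul K).aestronglyMeasurable)
      (C := |K| * C) (c := fun i => |K| * c i) ?_
    · refine h.congr ?_
      filter_upwards with z
      simp only [hρ]
      ring
    · intro z
      calc |K * φ z| = |K| * |φ z| := abs_mul _ _
        _ ≤ |K| * (C + ∑ i, c i * |z i - μ0 i|) :=
            mul_le_mul_of_nonneg_left (hb z) (abs_nonneg K)
        _ = |K| * C + ∑ i, |K| * c i * |z i - μ0 i| := by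
            rw [mul_add, Finset.mul_sum]
            congr 1
            exact Finset.sum_congr rfl fun i _ => by ring
    -- measurability of g
  have hgmeas : Measurable g := by
    rw [hgdef]
    refine measurable_const.add ?_
    have hrw : (fun x : Fin h → ℝ => (Am *ᵥ (x - μX)) a)
        = fun x => ∑ j, Am a j * (x j - μX j) := by
      funext x; simp [Matrix.mulVec, dotProduct]
    rw [hrw]
    exact Finset.measurable_sum _ fun j _ =>
      ((measurable_pi_apply j).sub measurable_const).const_mul _
  have habs : ∀ t c0 : ℝ, |t| ≤ |c0| + |t - c0| := by
    intro t c0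
    calc |t| = |(t - c0) + c0| := by ring_nf
      _ ≤ |t - c0| + |c0| := abs_add_le _ _
      _ = |c0| + |t - c0| := by ring
  -- integrability of ξ_a
  have hφ1int : Integrable (fun z : ι → ℝ => z (Sum.inl a) * ρ z) volume := by
    refine master _ (measurable_pi_apply _) |μ0 (Sum.inl a)|
      (fun i => if i = Sum.inl a then 1 else 0) fun z => ?_
    have hsum : ∑ i, (if i = Sum.inl a then (1:ℝ) else 0) * |z i - μ0 i|
        = |z (Sum.inl a) - μ0 (Sum.inl a)| := by
      simp only [ite_mul, one_mul, zero_mul]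
      rw [Finset.sum_ite_eq' Finset.univ (Sum.inl a) (fun i => |z i - μ0 i|)]
      simp
    rw [hsum]
    exact habs _ _
  have hξaInt : Integrable (fun ω => ξ ω a) P := by
    have := (conv _ (measurable_pi_apply (Sum.inl a)) hφ1int).1
    simpa [hZdef] using this
  -- integrability of g ∘ X
  have hφ2meas : Measurable (fun z : ι → ℝ => g (fun j => z (Sum.inr j))) :=
    hgmeas.comp (measurable_pi_lambda _ fun j => measurable_pi_apply _)
  have hφ2bound : ∀ z : ι → ℝ, |g (fun j => z (Sum.inr j))|
      ≤ |μξ a| + ∑ i, (Sum.elim (fun _ => (0:ℝ)) fun j => |Am a j|) i * |z i - μ0 i| := by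
    intro z
    have h1 : g (fun j => z (Sum.inr j)) = μξ a + ∑ j, Am a j * (z (Sum.inr j) - μX j) := by
      simp [hgdef, Matrix.mulVec, dotProduct]
    have h2 : ∑ i, (Sum.elim (fun _ => (0:ℝ)) fun j => |Am a j|) i * |z i - μ0 i|
        = ∑ j, |Am a j| * |z (Sum.inr j) - μX j| := by
      rw [Fintype.sum_sum_type]
      simp [hμ0]
    rw [h1, h2]
    calc |μξ a + ∑ j, Am a j * (z (Sum.inr j) - μX j)|
        ≤ |μξ a| + |∑ j, Am a j * (z (Sum.inr j) - μX j)| := abs_add_le _ _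
      _ ≤ |μξ a| + ∑ j, |Am a j * (z (Sum.inr j) - μX j)| :=
          add_le_add (le_refl _) (Finset.abs_sum_le_sum_abs _ _)
      _ = |μξ a| + ∑ j, |Am a j| * |z (Sum.inr j) - μX j| := by
          simp [abs_mul]
  have hgXInt : Integrable (fun ω => g (X ω)) P := by
    have := (conv _ hφ2meas (master _ hφ2meas _ _ hφ2bound)).1
    simpa [hZdef] using this
  have hpos' : (Matrix.fromBlocks Sξ SξX SξXᵀ SX).PosDef := hSig ▸ hpos
  -- the set-integral identity
  have hg_eq : ∀ s, MeasurableSet[MeasurableSpace.comap X inferInstance] s → P s < ⊤ →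
      ∫ ω in s, g (X ω) ∂P = ∫ ω in s, ξ ω a ∂P := by
    intro s hs _
    obtain ⟨B, hB, rfl⟩ := hs
    set ψ : (Fin h → ℝ) → ℝ := Set.indicator B (fun _ => (1:ℝ)) with hψ
    have hψmeas : Measurable ψ := measurable_const.indicator hB
    have hψle : ∀ x, |ψ x| ≤ 1 := by
      intro x
      by_cases hx : x ∈ B <;>
        simp [hψ, Set.indicator_of_mem, Set.indicator_of_notMem, hx]
    set φB : (ι → ℝ) → ℝ := fun z =>
      (z (Sum.inl a) - g (fun j => z (Sum.inr j))) * ψ (fun j => z (Sum.inr j)) with hφB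
    have hφBmeas : Measurable φB :=
      ((measurable_pi_apply _).sub hφ2meas).mul
        (hψmeas.comp (measurable_pi_lambda _ fun j => measurable_pi_apply _))
    have hφBbound : ∀ z, |φB z| ≤ 0 + ∑ i,
        (Sum.elim (fun i => if i = a then (1:ℝ) else 0) fun j => |Am a j|) i
          * |z i - μ0 i| := by
      intro z
      have hb1 : |φB z| ≤ |z (Sum.inl a) - g (fun j => z (Sum.inr j))| := by
        rw [hφB, abs_mul]
        have h1 := hψle (fun j => z (Sum.inr j))
        nlinarith [abs_nonneg (z (Sum.inl a) - g (fun j => z (Sum.inr j))),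
          abs_nonneg (ψ (fun j => z (Sum.inr j)))]
      have hexp : z (Sum.inl a) - g (fun j => z (Sum.inr j))
          = (z (Sum.inl a) - μξ a) - ∑ j, Am a j * (z (Sum.inr j) - μX j) := by
        simp [hgdef, Matrix.mulVec, dotProduct]
        ring
      have hsum : ∑ i, (Sum.elim (fun i => if i = a then (1:ℝ) else 0)
            fun j => |Am a j|) i * |z i - μ0 i|
          = |z (Sum.inl a) - μξ a| + ∑ j, |Am a j| * |z (Sum.inr j) - μX j| := by
        rw [Fintype.sum_sum_type]
        congr 1
        · simp only [Sum.elim_inl, ite_mul, one_mul, zero_mul]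
          rw [Finset.sum_ite_eq' Finset.univ a
            (fun i => |z (Sum.inl i) - μ0 (Sum.inl i)|)]
          simp [hμ0]
      rw [hsum, zero_add]
      refine le_trans hb1 ?_
      rw [hexp]
      calc |(z (Sum.inl a) - μξ a) - ∑ j, Am a j * (z (Sum.inr j) - μX j)|
          ≤ |z (Sum.inl a) - μξ a| + |∑ j, Am a j * (z (Sum.inr j) - μX j)| :=
            abs_sub _ _
        _ ≤ |z (Sum.inl a) - μξ a| + ∑ j, |Am a j| * |z (Sum.inr j) - μX j| := by
            refine add_le_add (le_refl _) (le_trans (Finset.abs_sum_le_sum_abs _ _) ?_)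
            simp [abs_mul]
    have hφBint := master _ hφBmeas 0 _ hφBbound
    have hconv := conv _ hφBmeas hφBint
    have hform : (fun z => φB z * ρ z) = fun z : ι → ℝ =>
        ((z (Sum.inl a) - (μξ a + ((SξX * SX⁻¹) *ᵥ ((fun j => z (Sum.inr j)) - μX)) a))
            * ψ (fun j => z (Sum.inr j)))
          * (K * Real.exp (-(1/2) * ((z - Sum.elim μξ μX) ⬝ᵥ
              (Matrix.fromBlocks Sξ SξX SξXᵀ SX)⁻¹ *ᵥ (z - Sum.elim μξ μX)))) := by
      funext z
      rw [hφB, hρ, hgdef, hAm, hμ0, hSig]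
    have hzero : ∫ z, φB z * ρ z = 0 := by
      rw [hform]
      exact gauss_inner_zero hpos' μξ μX a K ψ (hform ▸ hφBint)
    have hsplit : ∀ f : Ω → ℝ, ∫ ω in X ⁻¹' B, f ω ∂P = ∫ ω, f ω * ψ (X ω) ∂P := by
      intro f
      rw [← integral_indicator (hX hB)]
      congr 1; funext ω
      by_cases hω : X ω ∈ B
      · simp [Set.indicator_of_mem, hω, hψ, Set.mem_preimage]
      · simp [Set.indicator_of_notMem, hω, hψ, Set.mem_preimage]
    have hmeasξa : Measurable fun ω => ξ ω a := (measurable_pi_apply a).comp hξ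
    have hint1 : Integrable (fun ω => ξ ω a * ψ (X ω)) P := by
      refine hξaInt.abs.mono' ((hmeasξa.mul (hψmeas.comp hX)).aestronglyMeasurable) ?_
      filter_upwards with ω
      rw [Real.norm_eq_abs, abs_mul]
      nlinarith [hψle (X ω), abs_nonneg (ξ ω a), abs_nonneg (ψ (X ω))]
    have hint2 : Integrable (fun ω => g (X ω) * ψ (X ω)) P := by
      refine hgXInt.abs.mono'
        (((hgmeas.comp hX).mul (hψmeas.comp hX)).aestronglyMeasurable) ?_
      filter_upwards with ω
      rw [Real.norm_eq_abs, abs_mul]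
      nlinarith [hψle (X ω), abs_nonneg (g (X ω)), abs_nonneg (ψ (X ω))]
    have hφBZ : (fun ω => φB (Z ω)) = fun ω => (ξ ω a - g (X ω)) * ψ (X ω) := by
      funext ω
      simp only [hφB, hZdef, Sum.elim_inl, Sum.elim_inr]
    have hdiff : ∫ ω, ξ ω a * ψ (X ω) ∂P - ∫ ω, g (X ω) * ψ (X ω) ∂P = 0 := by
      rw [← integral_sub hint1 hint2]
      have hrw2 : (fun ω => ξ ω a * ψ (X ω) - g (X ω) * ψ (X ω))
          = fun ω => φB (Z ω) := by
        rw [hφBZ]; funext ω; ring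
      rw [hrw2, hconv.2, hzero]
    rw [hsplit, hsplit]
    linarith [hdiff]
  have hXcm : Measurable[MeasurableSpace.comap X inferInstance] X :=
    Measurable.of_comap_le le_rfl
  have hgm' : AEStronglyMeasurable[MeasurableSpace.comap X inferInstance]
      (fun ω => g (X ω)) P :=
    StronglyMeasurable.aestronglyMeasurable
      (Measurable.stronglyMeasurable (hgmeas.comp hXcm))
  have hres := ae_eq_condExp_of_forall_setIntegral_eq hm hξaInt
    (fun s _ _ => hgXInt.integrableOn) hg_eq hgm'
  have hfinal : (fun ω => g (X ω)) = fun ω => μξ a + ((SξX * SX⁻¹) *ᵥ (X ω - μX)) a := by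
    funext ω; rw [hgdef, hAm]
  rw [← hfinal]
  exact hres.symm
end
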